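/- Let H be a complex Hilbert space, P0 an orthogonal projection on H, f0 a unit vector with P0 f0 = f0, and let Q0 = P0 − f0⊗f0 (the orthogonal projection onto R(P0) ⊖ ⟨f0⟩). For any anti-Hermitian X ∈ B(H), there exists an anti-Hermitian Y0 ∈ B(H) with Y0 = Q0 Y0 Q0 such that ‖P0 (X + Y0)‖ ≤ ‖P0 (X + Y)‖ for every anti-Hermitian Y ∈ B(H) with Y = Q0 Y Q0. That is, the first-row minimization problem always has a solution. -/

import Mathlib

open scoped InnerProductSpace
open ContinuousLinearMap

/-- The rank-one operator `x ⊗ y`, with `(x ⊗ y) z = ⟨z, y⟩ x` (inner product linear in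
the first variable); in Mathlib's convention this is `z ↦ ⟪y, z⟫ • x`. -/
noncomputable def rankOne {H : Type*} [NormedAddCommGroup H] [InnerProductSpace ℂ H]
    (x y : H) : H →L[ℂ] H :=
  (innerSL ℂ y).smulRight x

open Filter Metric in
private lemma exists_ultra_lim (U : Ultrafilter ℕ) (g : ℕ → ℂ) (C : ℝ)
    (hg : ∀ n, ‖g n‖ ≤ C) : ∃ z, Filter.Tendsto g ↑U (nhds z) := by
  obtain ⟨z, -, hz⟩ := (isCompact_closedBall (0:ℂ) C).ultrafilter_le_nhds (U.map g)
    (le_principal_iff.2 (by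
      rw [Ultrafilter.coe_map, Filter.mem_map]
      exact Filter.univ_mem' fun n => by
        simpa [Metric.mem_closedBall, dist_zero_right] using hg n))
  rw [Ultrafilter.coe_map] at hz
  exact ⟨z, hz⟩

set_option maxHeartbeats 1000000 in
/-- With `Q0 = P0 − f0⊗f0` (the orthogonal projection onto
`R(P0) ⊖ ⟨f0⟩`), for any anti-Hermitian `X` there is an anti-Hermitian `Y0` with
`Y0 = Q0 Y0 Q0` minimizing the norm of the first block-row: `‖P0(X + Y0)‖ ≤ ‖P0(X + Y)‖`
for every anti-Hermitian `Y` with `Y = Q0 Y Q0`. -/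
theorem exists_first_row_minimizer
    {H : Type*} [NormedAddCommGroup H] [InnerProductSpace ℂ H] [CompleteSpace H]
    (P0 : H →L[ℂ] H) (hP0sa : IsSelfAdjoint P0) (hP0idem : P0 * P0 = P0)
    (f0 : H) (hf0 : ‖f0‖ = 1) (hf0fix : P0 f0 = f0)
    (X : H →L[ℂ] H) (hX : adjoint X = -X) :
    ∃ Y0 : H →L[ℂ] H, adjoint Y0 = -Y0 ∧
      Y0 = (P0 - rankOne f0 f0) * Y0 * (P0 - rankOne f0 f0) ∧
      ∀ Y : H →L[ℂ] H, adjoint Y = -Y →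
        Y = (P0 - rankOne f0 f0) * Y * (P0 - rankOne f0 f0) →
        ‖P0 * (X + Y0)‖ ≤ ‖P0 * (X + Y)‖ := by
  classical
  set R : H →L[ℂ] H := rankOne f0 f0 with hRdef
  set Q : H →L[ℂ] H := P0 - R with hQdef
  have hP0adj : adjoint P0 = P0 := by
    rw [← star_eq_adjoint]; exact hP0sa.star_eq
  have hinP : ∀ x y : H, ⟪P0 x, y⟫_ℂ = ⟪x, P0 y⟫_ℂ := by
    intro x y
    conv_lhs => rw [← hP0adj]
    exact adjoint_inner_left P0 y x
  have hRapp : ∀ z : H, R z = ⟪f0, z⟫_ℂ • f0 := fun z => rfl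
  have hRadj : adjoint R = R := by
    ext z
    apply ext_inner_right ℂ
    intro v
    rw [adjoint_inner_left, hRapp, hRapp, inner_smul_right, inner_smul_left,
      inner_conj_symm]
    ring
  have hQadj : adjoint Q = Q := by
    rw [hQdef, map_sub, hP0adj, hRadj]
  have hinQ : ∀ x y : H, ⟪Q x, y⟫_ℂ = ⟪x, Q y⟫_ℂ := by
    intro x y
    conv_lhs => rw [← hQadj]
    exact adjoint_inner_left Q y x
  have hf0inner : ⟪f0, f0⟫_ℂ = 1 := by
    rw [inner_self_eq_norm_sq_to_K, hf0]; norm_num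
  have hPR : P0 * R = R := by
    ext z
    show P0 (R z) = R z
    rw [hRapp, map_smul, hf0fix]
  have hRP : R * P0 = R := by
    ext z
    show R (P0 z) = R z
    rw [hRapp, hRapp, ← hinP, hf0fix]
  have hRR : R * R = R := by
    ext z
    show R (R z) = R z
    rw [hRapp, hRapp z, inner_smul_right, hf0inner, mul_one]
  have hQQ : Q * Q = Q := by
    rw [hQdef, sub_mul, mul_sub, mul_sub, hP0idem, hPR, hRP, hRR]
    abel
  have hQP : Q * P0 = Q := by
    rw [hQdef, sub_mul, hP0idem, hRP]
  have hQle : ∀ z : H, ‖Q z‖ ≤ ‖z‖ := by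
    intro z
    have h1 : ⟪Q z, Q z⟫_ℂ = ⟪Q z, z⟫_ℂ := by
      have h := adjoint_inner_left Q z (Q z)
      rw [hQadj] at h
      rw [← h]
      show ⟪(Q * Q) z, z⟫_ℂ = ⟪Q z, z⟫_ℂ
      rw [hQQ]
    have h2 : ‖Q z‖ ^ 2 ≤ ‖Q z‖ * ‖z‖ := by
      have h3 : ‖⟪Q z, Q z⟫_ℂ‖ ≤ ‖Q z‖ * ‖z‖ := h1 ▸ norm_inner_le_norm _ _
      rwa [inner_self_eq_norm_sq_to_K, norm_pow, RCLike.norm_ofReal,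
        abs_of_nonneg (norm_nonneg _)] at h3
    nlinarith [norm_nonneg (Q z), norm_nonneg z]
  have hQAQ : ∀ A : H →L[ℂ] H, ‖Q * A * Q‖ ≤ ‖A‖ := by
    intro A
    refine opNorm_le_bound _ (norm_nonneg A) fun z => ?_
    calc ‖(Q * A * Q) z‖ = ‖Q (A (Q z))‖ := rfl
      _ ≤ ‖A (Q z)‖ := hQle _
      _ ≤ ‖A‖ * ‖Q z‖ := le_opNorm _ _
      _ ≤ ‖A‖ * ‖z‖ := mul_le_mul_of_nonneg_left (hQle z) (norm_nonneg A)
  have hQPXQ : ∀ Y : H →L[ℂ] H, Y = Q * Y * Q →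
      Q * (P0 * (X + Y)) * Q = Q * X * Q + Y := by
    intro Y hY2
    have h1 : Q * (P0 * (X + Y)) * Q = (Q * P0) * (X + Y) * Q := by
      noncomm_ring
    rw [h1, hQP, mul_add, add_mul, ← hY2]
  -- the set of achievable norms
  set Sv : Set ℝ := {r | ∃ Y : H →L[ℂ] H, adjoint Y = -Y ∧ Y = Q * Y * Q ∧
    r = ‖P0 * (X + Y)‖} with hSv
  have h0mem : (‖P0 * (X + 0)‖ : ℝ) ∈ Sv := by
    refine ⟨0, ?_, by simp, rfl⟩
    rw [← star_eq_adjoint]; simp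
  have hSne : Sv.Nonempty := ⟨_, h0mem⟩
  have hSbd : BddBelow Sv := by
    refine ⟨0, fun r hr => ?_⟩
    obtain ⟨Y, -, -, hr⟩ := hr
    exact hr ▸ norm_nonneg _
  set m : ℝ := sInf Sv with hm
  have hm0 : 0 ≤ m := by
    refine le_csInf hSne fun r hr => ?_
    obtain ⟨Y, -, -, hr⟩ := hr
    exact hr ▸ norm_nonneg _
  have hseq : ∀ n : ℕ, ∃ Y : H →L[ℂ] H, adjoint Y = -Y ∧ Y = Q * Y * Q ∧
      ‖P0 * (X + Y)‖ < m + 1 / ((n : ℝ) + 1) := by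
    intro n
    have hpos : (0 : ℝ) < 1 / ((n : ℝ) + 1) := by positivity
    obtain ⟨r, hrS, hrlt⟩ := exists_lt_of_csInf_lt hSne
      (show sInf Sv < m + 1 / ((n : ℝ) + 1) by rw [← hm]; linarith)
    obtain ⟨Y, h1, h2, rfl⟩ := hrS
    exact ⟨Y, h1, h2, hrlt⟩
  choose Ys hs1 hs2 hs3 using hseq
  set C : ℝ := ‖X‖ + (m + 1) with hC
  have hC0 : 0 ≤ C := by
    have := norm_nonneg X; rw [hC]; linarith
  have hCb : ∀ n, ‖Ys n‖ ≤ C := by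
    intro n
    have h1 : Ys n = Q * (P0 * (X + Ys n)) * Q - Q * X * Q := by
      rw [hQPXQ _ (hs2 n)]; abel
    have hfrac : 1 / ((n : ℝ) + 1) ≤ 1 := by
      rw [div_le_one (by positivity)]
      have : (0:ℝ) ≤ (n:ℝ) := Nat.cast_nonneg n
      linarith
    calc ‖Ys n‖ = ‖Q * (P0 * (X + Ys n)) * Q - Q * X * Q‖ := by rw [← h1]
      _ ≤ ‖Q * (P0 * (X + Ys n)) * Q‖ + ‖Q * X * Q‖ := norm_sub_le _ _
      _ ≤ ‖P0 * (X + Ys n)‖ + ‖X‖ := add_le_add (hQAQ _) (hQAQ _)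
      _ ≤ (m + 1 / ((n : ℝ) + 1)) + ‖X‖ := by linarith [hs3 n]
      _ ≤ C := by rw [hC]; linarith
  -- ultrafilter limit
  set U : Ultrafilter ℕ := Ultrafilter.of Filter.atTop with hU
  have hUle : (U : Filter ℕ) ≤ Filter.atTop := Ultrafilter.of_le _
  have hexlim : ∀ x y : H, ∃ z : ℂ,
      Filter.Tendsto (fun n => ⟪(Ys n) x, y⟫_ℂ) ↑U (nhds z) := by
    intro x y
    refine exists_ultra_lim U _ (C * ‖x‖ * ‖y‖) fun n => ?_
    calc ‖⟪(Ys n) x, y⟫_ℂ‖ ≤ ‖(Ys n) x‖ * ‖y‖ := norm_inner_le_norm _ _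
      _ ≤ (‖Ys n‖ * ‖x‖) * ‖y‖ :=
          mul_le_mul_of_nonneg_right (le_opNorm _ _) (norm_nonneg y)
      _ ≤ (C * ‖x‖) * ‖y‖ := by
          have h := hCb n
          gcongr
      _ = C * ‖x‖ * ‖y‖ := by ring
  choose L hL using hexlim
  have huniq : ∀ {g : ℕ → ℂ} {a b : ℂ}, Filter.Tendsto g ↑U (nhds a) →
      Filter.Tendsto g ↑U (nhds b) → a = b := fun h1 h2 => tendsto_nhds_unique h1 h2
  have hφbound : ∀ x y : H, ‖L x y‖ ≤ (C * ‖x‖) * ‖y‖ := by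
    intro x y
    refine le_of_tendsto' (hL x y).norm fun n => ?_
    calc ‖⟪(Ys n) x, y⟫_ℂ‖ ≤ ‖(Ys n) x‖ * ‖y‖ := norm_inner_le_norm _ _
      _ ≤ (‖Ys n‖ * ‖x‖) * ‖y‖ :=
          mul_le_mul_of_nonneg_right (le_opNorm _ _) (norm_nonneg y)
      _ ≤ (C * ‖x‖) * ‖y‖ := by
          have h := hCb n
          gcongr
  set φ : H → StrongDual ℂ H := fun x => LinearMap.mkContinuous
    { toFun := L x
      map_add' := fun y y' => huniq (hL x (y + y'))
        (((hL x y).add (hL x y')).congr fun n => (inner_add_right _ _ _).symm)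
      map_smul' := fun c y => by
        simpa using huniq (hL x (c • y))
          (((hL x y).const_mul c).congr fun n => (inner_smul_right _ _ _).symm) }
    (C * ‖x‖) (hφbound x) with hφ
  have hφapp : ∀ x y : H, φ x y = L x y := fun _ _ => rfl
  have hsym : ∀ x y : H,
      ⟪(InnerProductSpace.toDual ℂ H).symm (φ x), y⟫_ℂ = L x y := fun x y =>
    InnerProductSpace.toDual_symm_apply
  have hφnorm : ∀ x : H, ‖φ x‖ ≤ C * ‖x‖ := fun x =>
    LinearMap.mkContinuous_norm_le _ (mul_nonneg hC0 (norm_nonneg x)) _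
  set Ylin : H →ₗ[ℂ] H :=
    { toFun := fun x => (InnerProductSpace.toDual ℂ H).symm (φ x)
      map_add' := fun x x' => by
        apply ext_inner_right ℂ
        intro v
        rw [inner_add_left, hsym, hsym, hsym]
        exact huniq (hL (x + x') v)
          (((hL x v).add (hL x' v)).congr fun n => by rw [map_add, inner_add_left])
      map_smul' := fun c x => by
        apply ext_inner_right ℂ
        intro v
        rw [RingHom.id_apply, inner_smul_left, hsym, hsym]
        exact huniq (hL (c • x) v)
          (((hL x v).const_mul (starRingEnd ℂ c)).congr fun n => by
            rw [map_smul, inner_smul_left]) } with hYlin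
  set Ylim : H →L[ℂ] H := Ylin.mkContinuous C (fun x => by
    show ‖(InnerProductSpace.toDual ℂ H).symm (φ x)‖ ≤ C * ‖x‖
    rw [LinearIsometryEquiv.norm_map]
    exact hφnorm x) with hYlimdef
  have hYlim : ∀ x y : H, ⟪Ylim x, y⟫_ℂ = L x y := fun x y => hsym x y
  -- Ylim is anti-Hermitian
  have hadj : adjoint Ylim = -Ylim := by
    ext x
    apply ext_inner_right ℂ
    intro v
    rw [adjoint_inner_left]
    have t1 : Filter.Tendsto (fun n => -⟪(Ys n) x, v⟫_ℂ) ↑U (nhds (-(L x v))) :=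
      (hL x v).neg
    have t2 : Filter.Tendsto (fun n => -⟪(Ys n) x, v⟫_ℂ) ↑U
        (nhds ((starRingEnd ℂ) (L v x))) := by
      refine ((Complex.continuous_conj.tendsto _).comp (hL v x)).congr fun n => ?_
      show (starRingEnd ℂ) ⟪(Ys n) v, x⟫_ℂ = -⟪(Ys n) x, v⟫_ℂ
      rw [inner_conj_symm]
      have h := hs1 n
      have : (Ys n) v = -((adjoint (Ys n)) v) := by rw [h]; simp
      rw [this, inner_neg_right, adjoint_inner_right]
    have hcv : (starRingEnd ℂ) (L v x) = -(L x v) := huniq t2 t1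
    calc ⟪x, Ylim v⟫_ℂ = (starRingEnd ℂ) ⟪Ylim v, x⟫_ℂ := (inner_conj_symm _ _).symm
      _ = (starRingEnd ℂ) (L v x) := by rw [hYlim]
      _ = -(L x v) := hcv
      _ = -⟪Ylim x, v⟫_ℂ := by rw [hYlim]
      _ = ⟪(-Ylim) x, v⟫_ℂ := by rw [neg_apply, inner_neg_left]
  -- Ylim is supported on Q
  have hQform : Ylim = Q * Ylim * Q := by
    ext x
    apply ext_inner_right ℂ
    intro v
    have hrhs : ⟪(Q * Ylim * Q) x, v⟫_ℂ = L (Q x) (Q v) := by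
      show ⟪Q (Ylim (Q x)), v⟫_ℂ = L (Q x) (Q v)
      rw [hinQ, hYlim]
    rw [hYlim, hrhs]
    refine huniq (hL x v) ((hL (Q x) (Q v)).congr fun n => ?_)
    show ⟪(Ys n) (Q x), Q v⟫_ℂ = ⟪(Ys n) x, v⟫_ℂ
    rw [← hinQ]
    show ⟪(Q * Ys n * Q) x, v⟫_ℂ = ⟪(Ys n) x, v⟫_ℂ
    rw [← hs2 n]
  -- Ylim attains the infimum
  have hkey : ∀ x y : H, Filter.Tendsto (fun n => ⟪(P0 * (X + Ys n)) x, y⟫_ℂ) ↑U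
      (nhds ⟪(P0 * (X + Ylim)) x, y⟫_ℂ) := by
    intro x y
    have hfun : ∀ n, ⟪(P0 * (X + Ys n)) x, y⟫_ℂ
        = ⟪X x, P0 y⟫_ℂ + ⟪(Ys n) x, P0 y⟫_ℂ := by
      intro n
      rw [mul_apply_eq_comp, hinP, add_apply, inner_add_left]
    have hval : ⟪(P0 * (X + Ylim)) x, y⟫_ℂ = ⟪X x, P0 y⟫_ℂ + L x (P0 y) := by
      rw [mul_apply_eq_comp, hinP, add_apply, inner_add_left, hYlim]
    rw [hval]
    exact (tendsto_const_nhds.add (hL x (P0 y))).congr fun n => (hfun n).symm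
  have hAle : ∀ x y : H, ‖⟪(P0 * (X + Ylim)) x, y⟫_ℂ‖ ≤ m * ‖x‖ * ‖y‖ := by
    intro x y
    have t1 := (hkey x y).norm
    have t2 : Filter.Tendsto (fun n : ℕ => (m + 1 / ((n : ℝ) + 1)) * ‖x‖ * ‖y‖) ↑U
        (nhds (m * ‖x‖ * ‖y‖)) := by
      have h3 : Filter.Tendsto (fun n : ℕ => (m + 1 / ((n : ℝ) + 1)) * ‖x‖ * ‖y‖)
          Filter.atTop (nhds ((m + 0) * ‖x‖ * ‖y‖)) :=
        ((tendsto_const_nhds.add tendsto_one_div_add_atTop_nhds_zero_nat).mul_const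
          _).mul_const _
      rw [add_zero] at h3
      exact h3.mono_left hUle
    refine le_of_tendsto_of_tendsto' t1 t2 fun n => ?_
    have hb : ‖P0 * (X + Ys n)‖ ≤ m + 1 / ((n : ℝ) + 1) := (hs3 n).le
    calc ‖⟪(P0 * (X + Ys n)) x, y⟫_ℂ‖ ≤ ‖(P0 * (X + Ys n)) x‖ * ‖y‖ :=
          norm_inner_le_norm _ _
      _ ≤ (‖P0 * (X + Ys n)‖ * ‖x‖) * ‖y‖ :=
          mul_le_mul_of_nonneg_right (le_opNorm _ _) (norm_nonneg y)
      _ ≤ ((m + 1 / ((n : ℝ) + 1)) * ‖x‖) * ‖y‖ := by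
          gcongr
      _ = (m + 1 / ((n : ℝ) + 1)) * ‖x‖ * ‖y‖ := by ring
  have hAnorm : ‖P0 * (X + Ylim)‖ ≤ m := by
    refine opNorm_le_bound _ hm0 fun x => ?_
    rcases eq_or_lt_of_le (norm_nonneg ((P0 * (X + Ylim)) x)) with hz | hz
    · rw [← hz]
      exact mul_nonneg hm0 (norm_nonneg x)
    · have h := hAle x ((P0 * (X + Ylim)) x)
      rw [inner_self_eq_norm_sq_to_K, norm_pow, RCLike.norm_ofReal,
        abs_of_nonneg (norm_nonneg _)] at h
      nlinarith
  refine ⟨Ylim, hadj, hQform, fun Y hY1 hY2 => ?_⟩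
  have hmle : m ≤ ‖P0 * (X + Y)‖ := csInf_le hSbd ⟨Y, hY1, hY2, rfl⟩
  linarith
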